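/- (Euler's theorem as a limit of lecture hall) The number of partitions of m into distinct parts equals the number of partitions of m into odd parts, and moreover both equal the number of lecture hall partitions of length n with sum m for any n ≥ m. -/

import Mathlib

open Finset

namespace ELH

def v2 (n : ℕ) : ℕ := n.factorization 2
def op (n : ℕ) : ℕ := n / 2 ^ v2 n

lemma decomp (n : ℕ) : 2 ^ v2 n * op n = n := Nat.ordProj_mul_ordCompl_eq_self n 2

lemma op_odd {n : ℕ} (hn : n ≠ 0) : Odd (op n) := by
  rw [Nat.odd_iff, Nat.mod_two_ne_zero.symm]
  intro h
  exact Nat.not_dvd_ordCompl Nat.prime_two hn (Nat.dvd_of_mod_eq_zero h)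

lemma v2_mul_odd {a : ℕ} (e : ℕ) (ha : Odd a) : v2 (2 ^ e * a) = e := by
  have h2 : ¬ (2 ∣ a) := by rw [Nat.odd_iff] at ha; omega
  have ha0 : a ≠ 0 := by rintro rfl; simp at ha
  unfold v2
  rw [Nat.factorization_mul (by positivity) ha0]
  simp [Nat.Prime.factorization_pow, Nat.factorization_eq_zero_of_not_dvd h2,
    Nat.Prime.factorization Nat.prime_two]

lemma op_mul_odd {a : ℕ} (e : ℕ) (ha : Odd a) : op (2 ^ e * a) = a := by
  unfold op
  rw [v2_mul_odd e ha, Nat.mul_div_cancel_left _ (by positivity)]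

lemma unique_decomp {a b e f : ℕ} (ha : Odd a) (hb : Odd b) (h : 2 ^ e * a = 2 ^ f * b) :
    e = f ∧ a = b := by
  have h1 : e = f := by rw [← v2_mul_odd e ha, h, v2_mul_odd f hb]
  refine ⟨h1, ?_⟩
  subst h1
  exact Nat.eq_of_mul_eq_mul_left (by positivity) h

/-- Glaisher: odd-multiplicity function to finset of distinct parts. -/
def phi (f : ℕ →₀ ℕ) : Finset ℕ :=
  f.support.biUnion fun a => (((f a).bitIndices).map (fun e => 2 ^ e * a)).toFinset

/-- Glaisher: finset of distinct parts to odd-multiplicity function. -/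
noncomputable def psi (s : Finset ℕ) : ℕ →₀ ℕ :=
  ∑ n ∈ s, Finsupp.single (op n) (2 ^ v2 n)

lemma mem_phi {f : ℕ →₀ ℕ} {n : ℕ} :
    n ∈ phi f ↔ ∃ a ∈ f.support, ∃ e ∈ (f a).bitIndices, n = 2 ^ e * a := by
  simp [phi, @eq_comm _ n]

lemma bits_nodup {k a : ℕ} (ha : a ≠ 0) :
    ((k.bitIndices).map (fun e => 2 ^ e * a)).Nodup := by
  refine List.Nodup.map ?_ Nat.bitIndices_sorted.nodup
  intro x y h
  have := Nat.eq_of_mul_eq_mul_right (Nat.pos_of_ne_zero ha) h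
  exact Nat.pow_right_injective (le_refl 2) this

lemma phi_disj {f : ℕ →₀ ℕ} (hf : ∀ a ∈ f.support, Odd a) :
    (f.support : Set ℕ).PairwiseDisjoint
      (fun a => (((f a).bitIndices).map (fun e => 2 ^ e * a)).toFinset) := by
  intro a ha b hb hab
  simp only [Finset.disjoint_left, List.mem_toFinset, List.mem_map]
  rintro x ⟨e, he, rfl⟩ ⟨g, hg, hx⟩
  exact hab (unique_decomp (hf a ha) (hf b hb) hx.symm).2

lemma sum_phi {f : ℕ →₀ ℕ} (hf : ∀ a ∈ f.support, Odd a) :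
    ∑ x ∈ phi f, x = f.sum fun a k => k * a := by
  rw [phi, Finset.sum_biUnion (phi_disj hf)]
  refine Finset.sum_congr rfl fun a ha => ?_
  have ha0 : a ≠ 0 := by
    intro h; have := hf a ha; rw [h] at this; simp at this
  rw [List.sum_toFinset _ (bits_nodup ha0)]
  show (List.map (fun i => i) _).sum = f a * a
  rw [List.map_id']
  have : (((f a).bitIndices).map (fun e => 2 ^ e * a)).sum
      = (((f a).bitIndices).map (fun e => 2 ^ e)).sum * a := by
    rw [← List.sum_map_mul_right]
  rw [this, Nat.twoPowSum_bitIndices]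

lemma zero_not_mem_phi {f : ℕ →₀ ℕ} (hf : ∀ a ∈ f.support, Odd a) : 0 ∉ phi f := by
  rw [mem_phi]
  rintro ⟨a, ha, e, he, h⟩
  have ha0 : a ≠ 0 := by
    intro h'; have := hf a ha; rw [h'] at this; simp at this
  exact absurd h.symm (by positivity)

lemma psi_apply (s : Finset ℕ) (a : ℕ) :
    psi s a = ∑ n ∈ s.filter (fun n => op n = a), 2 ^ v2 n := by
  rw [psi, Finset.sum_apply', Finset.sum_filter]
  refine Finset.sum_congr rfl fun n _ => ?_
  rw [Finsupp.single_apply]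

lemma psi_support_odd {s : Finset ℕ} (hs : 0 ∉ s) :
    ∀ a ∈ (psi s).support, Odd a := by
  intro a ha
  have := Finsupp.support_finset_sum (s := s)
    (f := fun n => Finsupp.single (op n) (2 ^ v2 n)) ha
  simp only [Finset.mem_biUnion] at this
  obtain ⟨n, hn, hna⟩ := this
  have := Finsupp.support_single_subset hna
  simp only [Finset.mem_singleton] at this
  subst this
  exact op_odd (fun h => hs (h ▸ hn))

lemma psi_sum {s : Finset ℕ} :
    ((psi s).sum fun a k => k * a) = ∑ n ∈ s, n := by
  have h1 : (Finsupp.liftAddHom (α := ℕ) (M := ℕ) (N := ℕ)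
      (fun a => AddMonoidHom.mulRight a)) (psi s) = (psi s).sum fun a k => k * a :=
    Finsupp.liftAddHom_apply _ _
  rw [← h1, psi, map_sum]
  refine Finset.sum_congr rfl fun n hn => ?_
  rw [Finsupp.liftAddHom_apply_single]
  exact decomp n

end ELH

namespace ELH

lemma list_single_sum (a : ℕ) (L : List ℕ) :
    (L.map (fun e => (Finsupp.single a (2 ^ e) : ℕ →₀ ℕ))).sum
      = Finsupp.single a ((L.map (fun e => 2 ^ e)).sum) := by
  induction L with
  | nil => simp
  | cons x L ih => simp [ih, Finsupp.single_add]

lemma psi_phi {f : ℕ →₀ ℕ} (hf : ∀ a ∈ f.support, Odd a) : psi (phi f) = f := by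
  rw [psi, phi, Finset.sum_biUnion (phi_disj hf)]
  have key : ∀ a ∈ f.support,
      (∑ n ∈ (((f a).bitIndices).map (fun e => 2 ^ e * a)).toFinset,
        Finsupp.single (op n) (2 ^ v2 n)) = Finsupp.single a (f a) := by
    intro a ha
    have hodd := hf a ha
    have ha0 : a ≠ 0 := by rintro rfl; simp at hodd
    rw [List.sum_toFinset _ (bits_nodup ha0), List.map_map]
    have h1 : ((f a).bitIndices.map
        ((fun n => Finsupp.single (op n) (2 ^ v2 n)) ∘ (fun e => 2 ^ e * a)))
        = ((f a).bitIndices.map (fun e => (Finsupp.single a (2 ^ e) : ℕ →₀ ℕ))) := by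
      refine List.map_congr_left fun e he => ?_
      simp [Function.comp, op_mul_odd e hodd, v2_mul_odd e hodd]
    rw [h1, list_single_sum, Nat.twoPowSum_bitIndices]
  rw [Finset.sum_congr rfl key]
  exact Finsupp.sum_single f

lemma mem_bitIndices_psi {s : Finset ℕ} (hs : 0 ∉ s) (a e : ℕ) :
    e ∈ (psi s a).bitIndices ↔ ∃ n ∈ s, op n = a ∧ v2 n = e := by
  classical
  set F := s.filter (fun n => op n = a) with hF
  have hinj : ∀ x ∈ F, ∀ y ∈ F, v2 x = v2 y → x = y := by
    intro x hx y hy hxy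
    rw [hF, Finset.mem_filter] at hx hy
    rw [← decomp x, ← decomp y, hxy, hx.2, hy.2]
  set I := F.image v2 with hI
  have h1 : psi s a = ((I.sort (· ≤ ·)).map (fun e => 2 ^ e)).sum := by
    have himg : ∑ e' ∈ I, 2 ^ e' = ∑ n ∈ F, 2 ^ v2 n := Finset.sum_image hinj
    rw [psi_apply, ← hF, ← himg,
      ← List.sum_toFinset _ (I.sort_nodup (· ≤ ·)), Finset.sort_toFinset]
  have h2 : (psi s a).bitIndices = I.sort (· ≤ ·) := by
    rw [h1, Nat.bitIndices_twoPowsum (I.sortedLT_sort)]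
  rw [h2]
  simp only [Finset.mem_sort, hI, Finset.mem_image, hF, Finset.mem_filter]
  constructor
  · rintro ⟨n, ⟨hn, hop⟩, hv⟩; exact ⟨n, hn, hop, hv⟩
  · rintro ⟨n, hn, hop, hv⟩; exact ⟨n, ⟨hn, hop⟩, hv⟩

lemma phi_psi {s : Finset ℕ} (hs : 0 ∉ s) : phi (psi s) = s := by
  ext n
  rw [mem_phi]
  constructor
  · rintro ⟨a, ha, e, he, rfl⟩
    obtain ⟨n', hn', hop, hv⟩ := (mem_bitIndices_psi hs a e).1 he
    rw [← hop, ← hv, decomp n']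
    exact hn'
  · intro hn
    have hn0 : n ≠ 0 := fun h => hs (h ▸ hn)
    refine ⟨op n, ?_, v2 n, ?_, (decomp n).symm⟩
    · rw [Finsupp.mem_support_iff, psi_apply]
      have : 0 < ∑ k ∈ s.filter (fun k => op k = op n), 2 ^ v2 k := by
        refine Finset.sum_pos (fun i _ => by positivity) ⟨n, ?_⟩
        simp [hn]
      omega
    · exact (mem_bitIndices_psi hs (op n) (v2 n)).2 ⟨n, hn, rfl, rfl⟩

end ELH

namespace ELH

variable (m : ℕ)

lemma multiset_sum_eq (q : Multiset ℕ) :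
    q.sum = (Multiset.toFinsupp q).sum fun a k => k * a := by
  rw [Finset.sum_multiset_count q, Finsupp.sum]
  rw [Multiset.toFinsupp_support]
  refine Finset.sum_congr rfl fun a _ => ?_
  rw [Multiset.toFinsupp_apply, smul_eq_mul]

/-- distinct partitions ≃ finsets of positives with given sum -/
noncomputable def equivDC :
    {p : Nat.Partition m // ∀ x ∈ p.parts, p.parts.count x ≤ 1} ≃
      {s : Finset ℕ // 0 ∉ s ∧ ∑ x ∈ s, x = m} where
  toFun p := ⟨⟨p.1.parts, Multiset.nodup_iff_count_le_one.2 fun a => by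
      by_cases h : a ∈ p.1.parts
      · exact p.2 a h
      · simp [Multiset.count_eq_zero_of_notMem h]⟩,
    fun h => by simpa using (p.1.parts_pos h).ne',
    by
      show (Multiset.map id p.1.parts).sum = m
      rw [Multiset.map_id]; exact p.1.parts_sum⟩
  invFun s := ⟨⟨s.1.val, fun {i} hi => Nat.pos_of_ne_zero (fun h => s.2.1 (h ▸ hi)),
      by
        have := s.2.2
        rwa [show (∑ x ∈ s.1, x) = (Multiset.map id s.1.val).sum from rfl,
          Multiset.map_id] at this⟩,
    fun x hx => le_of_eq (Multiset.count_eq_one_of_mem s.1.nodup hx)⟩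
  left_inv p := by ext : 2; rfl
  right_inv s := by ext : 2; rfl

/-- odd partitions ≃ finsupps with odd support and given weighted sum -/
noncomputable def equivOF :
    {p : Nat.Partition m // ∀ x ∈ p.parts, Odd x} ≃
      {f : ℕ →₀ ℕ // (∀ a ∈ f.support, Odd a) ∧ (f.sum fun a k => k * a) = m} where
  toFun p := ⟨Multiset.toFinsupp p.1.parts,
    fun a ha => p.2 a (by rwa [Multiset.toFinsupp_support, Multiset.mem_toFinset] at ha),
    by rw [← multiset_sum_eq]; exact p.1.parts_sum⟩
  invFun f := ⟨⟨Finsupp.toMultiset f.1,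
      fun {i} hi => by
        have : Odd i := f.2.1 i (by rwa [← Finsupp.mem_toMultiset])
        exact this.pos,
      by
        rw [multiset_sum_eq, Finsupp.toMultiset_toFinsupp]; exact f.2.2⟩,
    fun x hx => f.2.1 x (by rwa [← Finsupp.mem_toMultiset])⟩
  left_inv p := by ext : 2; exact Multiset.toFinsupp_toMultiset _
  right_inv f := by ext : 1; exact Finsupp.toMultiset_toFinsupp _

/-- the Glaisher equivalence on the coded types -/
noncomputable def equivCO :
    {s : Finset ℕ // 0 ∉ s ∧ ∑ x ∈ s, x = m} ≃
      {f : ℕ →₀ ℕ // (∀ a ∈ f.support, Odd a) ∧ (f.sum fun a k => k * a) = m} where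
  toFun s := ⟨psi s.1, psi_support_odd s.2.1, by rw [psi_sum]; exact s.2.2⟩
  invFun f := ⟨phi f.1, zero_not_mem_phi f.2.1, by rw [sum_phi f.2.1]; exact f.2.2⟩
  left_inv s := by ext : 1; exact phi_psi s.2.1
  right_inv f := by ext : 1; exact psi_phi f.2.1

lemma euler :
    Nat.card {p : Nat.Partition m // ∀ x ∈ p.parts, p.parts.count x ≤ 1} =
      Nat.card {p : Nat.Partition m // ∀ x ∈ p.parts, Odd x} := by
  rw [Nat.card_congr (equivDC m), Nat.card_congr (equivCO m),
    ← Nat.card_congr (equivOF m)]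

end ELH

open Finset

namespace ELH

variable {n : ℕ}

def LH (n : ℕ) (l : Fin n → ℕ) : Prop :=
  ∀ i j : Fin n, i ≤ j → (l i : ℚ) / ((i : ℕ) + 1) ≤ (l j : ℚ) / ((j : ℕ) + 1)

lemma lh_cross {l : Fin n → ℕ} (hl : LH n l) {i j : Fin n} (hij : i ≤ j) :
    l i * (j.val + 1) ≤ l j * (i.val + 1) := by
  have h := hl i j hij
  rw [div_le_div_iff₀ (by positivity) (by positivity)] at h
  exact_mod_cast h

lemma lh_lt {l : Fin n → ℕ} (hl : LH n l) {i j : Fin n} (hij : i < j) (hi : l i ≠ 0) :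
    l i < l j := by
  have h := lh_cross hl hij.le
  have hij' : i.val < j.val := hij
  by_contra hc
  push_neg at hc
  have h2 : l i * (j.val + 1) ≤ l i * (i.val + 1) :=
    h.trans (Nat.mul_le_mul_right _ hc)
  have h3 : 0 < l i := Nat.pos_of_ne_zero hi
  nlinarith

end ELH

namespace ELH

lemma card_val_filter (n k : ℕ) (hk : k ≤ n) :
    (univ.filter fun i : Fin n => k ≤ i.val).card = n - k := by
  rcases Nat.eq_or_lt_of_le hk with rfl | hlt
  · rw [Nat.sub_self]
    convert Finset.card_empty
    ext i; simp only [Finset.mem_filter, Finset.mem_univ, true_and, Finset.notMem_empty,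
      iff_false]
    omega
  · have : (univ.filter fun i : Fin n => k ≤ i.val) = Finset.Ici (⟨k, hlt⟩ : Fin n) := by
      ext i; simp [Fin.le_def]
    rw [this, Fin.card_Ici]

/-- a lecture hall partition is supported on a final segment determined by
its support's cardinality -/
lemma lh_support {l : Fin n → ℕ} (hl : LH n l) (i : Fin n) :
    l i ≠ 0 ↔ n - (univ.filter fun i => l i ≠ 0).card ≤ i.val := by
  set F := univ.filter fun i => l i ≠ 0 with hF
  set t := F.card with ht
  have htn : t ≤ n := by
    calc t ≤ (univ : Finset (Fin n)).card := Finset.card_le_card (Finset.filter_subset _ _)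
    _ = n := by simp
  have hup : ∀ i ∈ F, ∀ j : Fin n, i ≤ j → j ∈ F := by
    intro i hi j hij
    rw [hF, Finset.mem_filter] at hi ⊢
    rcases eq_or_lt_of_le hij with rfl | hlt
    · exact hi
    · refine ⟨Finset.mem_univ _, ?_⟩
      have := lh_lt hl hlt hi.2
      omega
  have key : F = univ.filter fun i : Fin n => n - t ≤ i.val := by
    have hsub : F ⊆ univ.filter fun i : Fin n => n - t ≤ i.val := by
      intro i hi
      simp only [Finset.mem_filter, Finset.mem_univ, true_and]
      by_contra hc
      push_neg at hc
      -- then Ici i ⊆ F has card n - i > t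
      have hIci : Finset.Ici i ⊆ F := fun j hj => hup i hi j (Finset.mem_Ici.1 hj)
      have := Finset.card_le_card hIci
      rw [Fin.card_Ici] at this
      omega
    have hcard : (univ.filter fun i : Fin n => n - t ≤ i.val).card = t := by
      rw [card_val_filter n (n - t) (Nat.sub_le _ _)]
      omega
    exact Finset.eq_of_subset_of_card_le hsub (by omega)
  constructor
  · intro hi
    have : i ∈ F := by rw [hF, Finset.mem_filter]; exact ⟨Finset.mem_univ _, hi⟩
    rw [key, Finset.mem_filter] at this
    exact this.2
  · intro hi
    have : i ∈ F := by rw [key, Finset.mem_filter]; exact ⟨Finset.mem_univ _, hi⟩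
    rw [hF, Finset.mem_filter] at this
    exact this.2

end ELH

namespace ELH

lemma sum_orderEmbOfFin (s : Finset ℕ) {t : ℕ} (h : s.card = t) :
    ∑ r : Fin t, s.orderEmbOfFin h r = ∑ x ∈ s, x := by
  refine Finset.sum_bij (fun r _ => s.orderEmbOfFin h r)
    (fun r _ => s.orderEmbOfFin_mem h r)
    (fun r _ r' _ hrr => (s.orderEmbOfFin h).injective hrr)
    (fun b hb => ?_) (fun r _ => rfl)
  have : b ∈ Set.range (s.orderEmbOfFin h) := by
    rw [Finset.range_orderEmbOfFin]; exact hb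
  obtain ⟨r, hr⟩ := this
  exact ⟨r, Finset.mem_univ r, hr⟩

lemma orderEmbOfFin_bound {s : Finset ℕ} (hs0 : 0 ∉ s) {t : ℕ} (h : s.card = t)
    (r : Fin t) : s.orderEmbOfFin h r + (t - 1 - r.val) ≤ ∑ x ∈ s, x := by
  set a := s.orderEmbOfFin h with ha
  have h1 : ∑ x ∈ s, x = ∑ q : Fin t, a q := (sum_orderEmbOfFin s h).symm
  have h2 : ∑ q ∈ Finset.Ici r, a q ≤ ∑ q : Fin t, a q :=
    Finset.sum_le_sum_of_subset (Finset.subset_univ _)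
  have h3 : ∑ q ∈ Finset.Ici r, a q = a r + ∑ q ∈ Finset.Ioi r, a q := by
    rw [Finset.Ici_eq_cons_Ioi, Finset.sum_cons]
  have h4 : (Finset.Ioi r).card ≤ ∑ q ∈ Finset.Ioi r, a q := by
    rw [Finset.card_eq_sum_ones]
    refine Finset.sum_le_sum fun q _ => ?_
    have : a q ∈ s := s.orderEmbOfFin_mem h q
    exact Nat.one_le_iff_ne_zero.2 fun hq => hs0 (hq ▸ this)
  have h5 : (Finset.Ioi r).card = t - 1 - r.val := Fin.card_Ioi r
  omega

variable {n : ℕ}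

/-- canonical placement of a finset of distinct positive parts as a lecture hall partition -/
noncomputable def place (n : ℕ) (s : Finset ℕ) : Fin n → ℕ :=
  fun i => if h : n - s.card ≤ i.val ∧ s.card ≤ n then
    s.orderEmbOfFin rfl ⟨i.val - (n - s.card), by have := i.isLt; omega⟩ else 0

lemma lh_of_adjacent {l : Fin n → ℕ}
    (h : ∀ i j : Fin n, j.val = i.val + 1 →
      (l i : ℚ) / ((i : ℕ) + 1) ≤ (l j : ℚ) / ((j : ℕ) + 1)) : LH n l := by
  have key : ∀ d (i j : Fin n), j.val = i.val + d →
      (l i : ℚ) / ((i : ℕ) + 1) ≤ (l j : ℚ) / ((j : ℕ) + 1) := by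
    intro d
    induction d with
    | zero =>
      intro i j hij
      have : i = j := Fin.ext (by omega)
      subst this; exact le_refl _
    | succ d ih =>
      intro i j hij
      have hj' : i.val + d < n := by have := j.isLt; omega
      exact (ih i ⟨i.val + d, hj'⟩ rfl).trans (h ⟨i.val + d, hj'⟩ j (by simp only [Fin.val_mk]; omega))
  intro i j hij
  exact key (j.val - i.val) i j (by omega)

lemma place_pos' {s : Finset ℕ} (htn : s.card ≤ n) {i : Fin n} {r : Fin s.card}
    (hr : r.val = i.val - (n - s.card)) (hi : n - s.card ≤ i.val) :
    place n s i = s.orderEmbOfFin rfl r := by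
  rw [place, dif_pos ⟨hi, htn⟩]
  congr 1
  exact Fin.ext hr.symm

lemma place_zero {s : Finset ℕ} {i : Fin n} (h : ¬ (n - s.card ≤ i.val ∧ s.card ≤ n)) :
    place n s i = 0 := dif_neg h

lemma place_mem {s : Finset ℕ} (htn : s.card ≤ n) {i : Fin n} (hi : n - s.card ≤ i.val) :
    place n s i ∈ s := by
  rw [place_pos' htn (r := ⟨i.val - (n - s.card), by have := i.isLt; omega⟩) rfl hi]
  exact s.orderEmbOfFin_mem rfl _

lemma place_lt_adj {s : Finset ℕ} (htn : s.card ≤ n) {i j : Fin n}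
    (hij : j.val = i.val + 1) (hi : n - s.card ≤ i.val) :
    place n s i < place n s j := by
  have hj : n - s.card ≤ j.val := by omega
  rw [place_pos' htn (r := ⟨i.val - (n - s.card), by have := i.isLt; omega⟩) rfl hi,
    place_pos' htn (r := ⟨j.val - (n - s.card), by have := j.isLt; omega⟩) rfl hj]
  exact (s.orderEmbOfFin rfl).strictMono (by rw [Fin.lt_def]; simp only [Fin.val_mk]; omega)

lemma place_le {s : Finset ℕ} (hs0 : 0 ∉ s) (hsum : ∑ x ∈ s, x ≤ n) (htn : s.card ≤ n)
    {i : Fin n} (hi : n - s.card ≤ i.val) : place n s i ≤ i.val + 1 := by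
  have hin := i.isLt
  set r : Fin s.card := ⟨i.val - (n - s.card), by omega⟩ with hrdef
  rw [place_pos' htn (r := r) rfl hi]
  have hb := (orderEmbOfFin_bound hs0 rfl r).trans hsum
  have hrv : r.val = i.val - (n - s.card) := rfl
  have hrt := r.isLt
  omega

lemma place_lh {s : Finset ℕ} (hs0 : 0 ∉ s) (hsum : ∑ x ∈ s, x ≤ n) :
    LH n (place n s) := by
  have htn : s.card ≤ n := by
    have : s.card ≤ ∑ x ∈ s, x := by
      rw [Finset.card_eq_sum_ones]
      exact Finset.sum_le_sum fun x hx => Nat.one_le_iff_ne_zero.2 fun h => hs0 (h ▸ hx)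
    omega
  apply lh_of_adjacent
  intro i j hij
  by_cases hi : n - s.card ≤ i.val
  · rw [div_le_div_iff₀ (by positivity) (by positivity)]
    have h1 : place n s i < place n s j := place_lt_adj htn hij hi
    have h2 : place n s i ≤ i.val + 1 := place_le hs0 hsum htn hi
    have key : place n s i * (j.val + 1) ≤ place n s j * (i.val + 1) := by nlinarith
    exact_mod_cast key
  · rw [place_zero (fun hc => hi hc.1)]
    simp only [Nat.cast_zero, zero_div]
    positivity

end ELH

namespace ELH

variable {n : ℕ}

lemma place_sum {s : Finset ℕ} (htn : s.card ≤ n) :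
    ∑ i, place n s i = ∑ x ∈ s, x := by
  rw [← sum_orderEmbOfFin s rfl]
  have h0 : ∑ i, place n s i
      = ∑ i ∈ univ.filter (fun i : Fin n => n - s.card ≤ i.val), place n s i := by
    refine (Finset.sum_subset (Finset.filter_subset _ _) ?_).symm
    intro i _ hiG
    simp only [Finset.mem_filter, Finset.mem_univ, true_and, not_le] at hiG
    refine place_zero ?_
    rintro ⟨h1, h2⟩
    omega
  rw [h0]
  refine Finset.sum_bij
    (fun i hi => (⟨i.val - (n - s.card), by
      have h1 := i.isLt
      have h2 := (Finset.mem_filter.1 hi).2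
      omega⟩ : Fin s.card))
    (fun i hi => Finset.mem_univ _) ?_ ?_ ?_
  · intro i hi i' hi' hii
    simp only [Finset.mem_filter, Finset.mem_univ, true_and] at hi hi'
    have := congrArg Fin.val hii
    simp only [Fin.val_mk] at this
    exact Fin.ext (by omega)
  · intro r _
    refine ⟨⟨n - s.card + r.val, by have := r.isLt; omega⟩, ?_, ?_⟩
    · simp only [Finset.mem_filter, Finset.mem_univ, true_and, Fin.val_mk]
      omega
    · exact Fin.ext (by simp only [Fin.val_mk]; omega)
  · intro i hi
    simp only [Finset.mem_filter, Finset.mem_univ, true_and] at hi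
    exact place_pos' htn rfl hi

lemma lh_injOn {l : Fin n → ℕ} (hl : LH n l) :
    ∀ x ∈ univ.filter (fun i => l i ≠ 0), ∀ y ∈ univ.filter (fun i => l i ≠ 0),
      l x = l y → x = y := by
  intro x hx y hy hxy
  simp only [Finset.mem_filter, Finset.mem_univ, true_and] at hx hy
  rcases lt_trichotomy x y with h | h | h
  · exact absurd hxy (lh_lt hl h hx).ne
  · exact h
  · exact absurd hxy.symm (lh_lt hl h hy).ne

lemma lh_eq_place {l : Fin n → ℕ} (hl : LH n l) :
    l = place n ((univ.filter fun i => l i ≠ 0).image l) := by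
  classical
  set F := univ.filter fun i => l i ≠ 0 with hF
  set s := F.image l with hs
  have hcard : s.card = F.card := Finset.card_image_of_injOn (fun x hx y hy h =>
    lh_injOn hl x hx y hy h)
  have hFn : F.card ≤ n := by
    have := Finset.card_le_card (Finset.filter_subset (fun i => l i ≠ 0) univ)
    simpa using this
  have htn : s.card ≤ n := by omega
  -- the strictly monotone enumeration of s by l on the final segment
  have hsupp : ∀ i : Fin n, l i ≠ 0 ↔ n - F.card ≤ i.val := fun i => lh_support hl i
  funext i
  by_cases hi : n - s.card ≤ i.val
  · -- f agrees with the canonical order embedding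
    have f_mem : ∀ r : Fin s.card,
        l ⟨n - s.card + r.val, by have := r.isLt; omega⟩ ∈ s := by
      intro r
      refine Finset.mem_image_of_mem l (Finset.mem_filter.2
        ⟨Finset.mem_univ _, (hsupp _).2 (by simp only [Fin.val_mk]; omega)⟩)
    have f_mono : StrictMono (fun r : Fin s.card =>
        l ⟨n - s.card + r.val, by have := r.isLt; omega⟩) := by
      intro r r' hrr
      refine lh_lt hl ?_ ?_
      · rw [Fin.lt_def]; simp only [Fin.val_mk]; omega
      · exact (hsupp _).2 (by simp only [Fin.val_mk]; omega)
    have huniq := Finset.orderEmbOfFin_unique (rfl : s.card = s.card)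
      (f := fun r : Fin s.card => l ⟨n - s.card + r.val, by have := r.isLt; omega⟩)
      (fun r => f_mem r) f_mono
    set r : Fin s.card := ⟨i.val - (n - s.card), by have := i.isLt; omega⟩ with hr
    refine Eq.trans ?_ (Eq.trans (congrFun huniq r) (place_pos' htn (r := r) rfl hi).symm)
    show l i = l _
    congr 1
    refine Fin.ext ?_
    simp only [Fin.val_mk, hr]
    omega
  · have hi0 : l i = 0 := by
      by_contra h
      exact hi (by rw [hcard]; exact (hsupp i).1 h)
    rw [hi0, place_zero (fun hc => hi hc.1)]

end ELH

namespace ELH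

lemma lh_card (n m : ℕ) (hmn : m ≤ n) :
    Nat.card {l : Fin n → ℕ // LH n l ∧ ∑ i, l i = m}
      = Nat.card {s : Finset ℕ // 0 ∉ s ∧ ∑ x ∈ s, x = m} := by
  classical
  have hsum_toC : ∀ (l : Fin n → ℕ), LH n l → ∑ i, l i = m →
      ∑ x ∈ (univ.filter fun i => l i ≠ 0).image l, x = m := by
    intro l hl hsum
    rw [Finset.sum_image (lh_injOn hl)]
    rw [Finset.sum_filter_ne_zero]
    exact hsum
  set toC : {l : Fin n → ℕ // LH n l ∧ ∑ i, l i = m} →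
      {s : Finset ℕ // 0 ∉ s ∧ ∑ x ∈ s, x = m} := fun L =>
    ⟨(univ.filter fun i => L.1 i ≠ 0).image L.1, by
      intro h0
      obtain ⟨i, hi, hi0⟩ := Finset.mem_image.1 h0
      exact (Finset.mem_filter.1 hi).2 hi0,
      hsum_toC L.1 L.2.1 L.2.2⟩ with htoC
  refine Nat.card_eq_of_bijective toC ⟨?_, ?_⟩
  · rintro ⟨l, hl, hsl⟩ ⟨l', hl', hsl'⟩ h
    have himg : (univ.filter fun i => l i ≠ 0).image l
        = (univ.filter fun i => l' i ≠ 0).image l' := congrArg Subtype.val h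
    refine Subtype.ext ?_
    show l = l'
    rw [lh_eq_place hl, lh_eq_place hl', himg]
  · rintro ⟨s, hs0, hssum⟩
    have hsum_le : ∑ x ∈ s, x ≤ n := by omega
    have htn : s.card ≤ n := by
      have : s.card ≤ ∑ x ∈ s, x := by
        rw [Finset.card_eq_sum_ones]
        exact Finset.sum_le_sum fun x hx => Nat.one_le_iff_ne_zero.2 fun h => hs0 (h ▸ hx)
      omega
    have hlh : LH n (place n s) := place_lh hs0 hsum_le
    refine ⟨⟨place n s, hlh, by rw [place_sum htn, hssum]⟩, ?_⟩
    refine Subtype.ext ?_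
    show (univ.filter fun i => place n s i ≠ 0).image (place n s) = s
    have hfilt : (univ.filter fun i => place n s i ≠ 0)
        = univ.filter fun i : Fin n => n - s.card ≤ i.val := by
      ext i
      simp only [Finset.mem_filter, Finset.mem_univ, true_and]
      constructor
      · intro hne
        by_contra hc
        exact hne (place_zero fun hcc => hc hcc.1)
      · intro hi h0
        exact hs0 (h0 ▸ place_mem htn hi)
    rw [hfilt]
    ext x
    simp only [Finset.mem_image, Finset.mem_filter, Finset.mem_univ, true_and]
    constructor
    · rintro ⟨i, hi, rfl⟩
      exact place_mem htn hi
    · intro hx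
      have : x ∈ Set.range (s.orderEmbOfFin rfl) := by
        rw [Finset.range_orderEmbOfFin]; exact hx
      obtain ⟨r, hr⟩ := this
      have hrn := r.isLt
      refine ⟨⟨n - s.card + r.val, by omega⟩, by simp only [Fin.val_mk]; omega, ?_⟩
      rw [place_pos' htn (r := r) (by simp only [Fin.val_mk]; omega)
        (by simp only [Fin.val_mk]; omega)]
      exact hr

end ELH


/-- Euler's theorem as a limit of the lecture hall theorem: the number
of partitions of `m` into distinct parts equals the number of partitions of `m` into
odd parts, and both equal the number of lecture hall partitions of length `n` with
sum `m` for any `n ≥ m`. -/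
theorem euler_limit_of_lecture_hall (m : ℕ) :
    Nat.card {p : Nat.Partition m // ∀ x ∈ p.parts, p.parts.count x ≤ 1} =
      Nat.card {p : Nat.Partition m // ∀ x ∈ p.parts, Odd x} ∧
    ∀ n : ℕ, m ≤ n →
      Nat.card {l : Fin n → ℕ //
          (∀ i j : Fin n, i ≤ j → (l i : ℚ) / ((i : ℕ) + 1) ≤ (l j : ℚ) / ((j : ℕ) + 1)) ∧
          ∑ i, l i = m} =
      Nat.card {p : Nat.Partition m // ∀ x ∈ p.parts, Odd x} := by
  refine ⟨ELH.euler m, fun n hn => ?_⟩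
  show Nat.card {l : Fin n → ℕ // ELH.LH n l ∧ ∑ i, l i = m} = _
  rw [ELH.lh_card n m hn, Nat.card_congr (ELH.equivCO m), ← Nat.card_congr (ELH.equivOF m)]
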